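/- Define N(k) := ∏_{p^e ∥ k} p^{⌊e/2⌋} for nonzero integers k (so N(±1) = 1). Then for every ε > 0 there is a constant C_ε such that for all real numbers D, R ≥ 1: Σ_{d, r ∈ ℤ, 0 < |d| ≤ D, 0 < |r| ≤ R} N(d r³) ≤ C_ε D^{1+ε} R^{2+ε}. -/

import Mathlib

noncomputable section

namespace BQPaper18

open Finset Real

/-- `N(k) = ∏_{p^e ∥ k} p^{⌊e/2⌋}` for a nonzero integer `k`:
the largest integer whose square divides `k` up to squarefree factors. -/
def N (k : ℤ) : ℕ :=
  ∏ p ∈ k.natAbs.primeFactors, p ^ (k.natAbs.factorization p / 2)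

/-- `N` for naturals. -/
def Nn (n : ℕ) : ℕ := ∏ p ∈ n.primeFactors, p ^ (n.factorization p / 2)

lemma Nn_pos (n : ℕ) : 0 < Nn n := by
  apply Finset.prod_pos
  intro p hp
  exact pow_pos (Nat.prime_of_mem_primeFactors hp).pos _

lemma prod_pf (n : ℕ) (hn : n ≠ 0) : ∏ p ∈ n.primeFactors, p ^ n.factorization p = n := by
  rw [← Nat.support_factorization]; exact Nat.factorization_prod_pow_eq_self hn

lemma Nn_sq_dvd (n : ℕ) (hn : n ≠ 0) : (Nn n) ^ 2 ∣ n := by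
  conv_rhs => rw [← prod_pf n hn]
  rw [Nn, ← Finset.prod_pow]
  apply Finset.prod_dvd_prod_of_dvd
  intro p _
  rw [← pow_mul]
  exact pow_dvd_pow p (by omega)

lemma Nn_dvd (n : ℕ) (hn : n ≠ 0) : Nn n ∣ n :=
  dvd_trans (dvd_pow_self _ two_ne_zero) (Nn_sq_dvd n hn)


/-- common-prime radical -/
def gab (a b : ℕ) : ℕ := ∏ p ∈ a.primeFactors ∩ b.primeFactors, p

lemma gab_dvd_left (a b : ℕ) : gab a b ∣ a :=
  dvd_trans (Finset.prod_dvd_prod_of_subset _ _ _ Finset.inter_subset_left)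
    (Nat.prod_primeFactors_dvd a)

lemma gab_dvd_right (a b : ℕ) : gab a b ∣ b :=
  dvd_trans (Finset.prod_dvd_prod_of_subset _ _ _ Finset.inter_subset_right)
    (Nat.prod_primeFactors_dvd b)

lemma gab_squarefree (a b : ℕ) : Squarefree (gab a b) := by
  rw [Nat.squarefree_iff_prime_squarefree]
  intro p hp hsq
  have hmem : p ∈ a.primeFactors ∩ b.primeFactors := by
    have : p ∣ gab a b := dvd_trans (dvd_mul_right p p) hsq
    have hpr : ∀ q ∈ a.primeFactors ∩ b.primeFactors, Nat.Prime q := fun q hq =>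
      Nat.prime_of_mem_primeFactors (Finset.mem_of_mem_inter_left hq)
    -- p prime dividing a product of primes: p is in the set
    rcases (Nat.Prime.prime hp).exists_mem_finset_dvd this with ⟨q, hq, hpq⟩
    have := ((Nat.prime_dvd_prime_iff_eq hp (hpr q hq)).mp hpq)
    rwa [this]
  -- then p*p divides product of distinct primes: contradiction
  have h2 : p * p ∣ p * ∏ q ∈ (a.primeFactors ∩ b.primeFactors).erase p, q := by
    rw [gab] at hsq
    rwa [← Finset.mul_prod_erase _ (fun q => q) hmem] at hsq
  have h3 : p ∣ ∏ q ∈ (a.primeFactors ∩ b.primeFactors).erase p, q :=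
    (mul_dvd_mul_iff_left (hp.pos.ne' : (p:ℕ) ≠ 0)).mp h2
  rcases (Nat.Prime.prime hp).exists_mem_finset_dvd h3 with ⟨q, hq, hpq⟩
  have hqp : q ≠ p := (Finset.mem_erase.mp hq).1
  have hqprime : Nat.Prime q :=
    Nat.prime_of_mem_primeFactors (Finset.mem_of_mem_inter_left (Finset.mem_of_mem_erase hq))
  exact hqp ((Nat.prime_dvd_prime_iff_eq hp hqprime).mp hpq).symm

lemma gab_pos (a b : ℕ) : 0 < gab a b :=
  Finset.prod_pos fun p hp =>
    (Nat.prime_of_mem_primeFactors (Finset.mem_of_mem_inter_left hp)).pos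

/-- Key pointwise bound: `Nn (a b³) ≤ Nn a * (b * Nn b) * gab a b`. -/
lemma Nn_mul_cube_le (a b : ℕ) (ha : a ≠ 0) (hb : b ≠ 0) :
    Nn (a * b ^ 3) ≤ Nn a * (b * Nn b) * gab a b := by
  have hb3 : b ^ 3 ≠ 0 := pow_ne_zero _ hb
  have hS : (a * b ^ 3).primeFactors = a.primeFactors ∪ b.primeFactors := by
    rw [Nat.primeFactors_mul ha hb3, Nat.primeFactors_pow b (by norm_num)]
  set S := a.primeFactors ∪ b.primeFactors with hSdef
  have hfac : ∀ p, (a * b ^ 3).factorization p = a.factorization p + 3 * b.factorization p := by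
    intro p
    rw [Nat.factorization_mul ha hb3, Nat.factorization_pow]
    simp [mul_comm]
  have hsub_a : a.primeFactors ⊆ S := Finset.subset_union_left
  have hsub_b : b.primeFactors ⊆ S := Finset.subset_union_right
  have hzero : ∀ {n : ℕ} (p : ℕ), p ∉ n.primeFactors → n.factorization p = 0 := by
    intro n p hp
    rw [← Nat.support_factorization] at hp
    exact Finsupp.notMem_support_iff.mp hp
  have hNa : Nn a = ∏ p ∈ S, p ^ (a.factorization p / 2) :=
    Finset.prod_subset hsub_a (fun p _ hp => by rw [hzero p hp]; norm_num)
  have hNb : Nn b = ∏ p ∈ S, p ^ (b.factorization p / 2) :=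
    Finset.prod_subset hsub_b (fun p _ hp => by rw [hzero p hp]; norm_num)
  have hbb : b = ∏ p ∈ S, p ^ b.factorization p := by
    conv_lhs => rw [← prod_pf b hb]
    exact Finset.prod_subset hsub_b (fun p _ hp => by rw [hzero p hp]; norm_num)
  have hinterS : a.primeFactors ∩ b.primeFactors ⊆ S :=
    Finset.inter_subset_left.trans hsub_a
  have hg : gab a b = ∏ p ∈ S, p ^ (if p ∈ a.primeFactors ∩ b.primeFactors then 1 else 0) := by
    rw [gab]
    rw [show (∏ p ∈ a.primeFactors ∩ b.primeFactors, p)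
        = ∏ p ∈ a.primeFactors ∩ b.primeFactors,
            p ^ (if p ∈ a.primeFactors ∩ b.primeFactors then 1 else 0) from
      Finset.prod_congr rfl (fun p hp => by rw [if_pos hp, pow_one])]
    exact Finset.prod_subset hinterS (fun p _ hp => by rw [if_neg hp]; norm_num)
  have hL : Nn (a * b ^ 3) = ∏ p ∈ S, p ^ ((a.factorization p + 3 * b.factorization p) / 2) := by
    rw [Nn, hS]
    exact Finset.prod_congr rfl (fun p _ => by rw [hfac p])
  have hR : Nn a * (b * Nn b) * gab a b
      = ∏ p ∈ S, p ^ (a.factorization p / 2 + (b.factorization p + b.factorization p / 2)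
          + (if p ∈ a.primeFactors ∩ b.primeFactors then 1 else 0)) := by
    rw [hNa, hNb, hg]
    nth_rewrite 1 [hbb]
    rw [← Finset.prod_mul_distrib, ← Finset.prod_mul_distrib, ← Finset.prod_mul_distrib]
    exact Finset.prod_congr rfl (fun p _ => by rw [← pow_add, ← pow_add, ← pow_add])
  rw [hL, hR]
  apply Finset.prod_le_prod'
  intro p hp
  have hp1 : 1 ≤ p := (Nat.prime_of_mem_primeFactors (by rwa [← hS] at hp)).one_lt.le
  apply Nat.pow_le_pow_right hp1
  by_cases hmem : p ∈ a.primeFactors ∩ b.primeFactors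
  · rw [if_pos hmem]; omega
  · rw [if_neg hmem]
    have : p ∉ a.primeFactors ∨ p ∉ b.primeFactors := by
      by_contra h
      push_neg at h
      exact hmem (Finset.mem_inter.mpr h)
    rcases this with h | h
    · rw [hzero p h]; omega
    · rw [hzero p h]; omega


lemma Hle (X : ℕ) : ∑ j ∈ Icc 1 X, (1 / (j:ℝ)) ≤ 1 + Real.log X := by
  have h1 : ∑ j ∈ Icc 1 X, (1 / (j:ℝ)) = ((harmonic X : ℚ) : ℝ) := by
    rw [harmonic_eq_sum_Icc]
    push_cast
    simp [one_div]
  rw [h1]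
  exact harmonic_le_one_add_log X

lemma Hnonneg (X : ℕ) : (0:ℝ) ≤ ∑ j ∈ Icc 1 X, (1 / (j:ℝ)) :=
  Finset.sum_nonneg fun j _ => by positivity

lemma log_nonneg' (X : ℕ) (hX : 1 ≤ X) : (0:ℝ) ≤ 1 + Real.log X := by
  have := Real.log_nonneg (by exact_mod_cast hX : (1:ℝ) ≤ X)
  linarith

lemma card_dvd_eq (X q : ℕ) : ((Icc 1 X).filter (q ∣ ·)).card = X / q := by
  rw [show Icc 1 X = Ioc 0 X from by rw [← Finset.Icc_add_one_left_eq_Ioc, zero_add]]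
  exact Nat.Ioc_filter_dvd_card_eq_div X q

lemma harm_dvd (X q : ℕ) (hq : 1 ≤ q) :
    ∑ m ∈ (Icc 1 X).filter (q ∣ ·), (1 / (m:ℝ)) ≤ (1/q) * (1 + Real.log X) := by
  have himg : (Icc 1 X).filter (q ∣ ·) = (Icc 1 (X / q)).image (fun j => q * j) := by
    ext m
    simp only [Finset.mem_filter, Finset.mem_Icc, Finset.mem_image]
    constructor
    · rintro ⟨⟨h1, h2⟩, hdvd⟩
      refine ⟨m / q, ⟨?_, Nat.div_le_div_right h2⟩, Nat.mul_div_cancel' hdvd⟩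
      rw [Nat.one_le_div_iff hq]
      exact Nat.le_of_dvd h1 hdvd
    · rintro ⟨j, ⟨hj1, hj2⟩, rfl⟩
      refine ⟨⟨Nat.one_le_iff_ne_zero.mpr (by positivity), ?_⟩, Dvd.intro j rfl⟩
      calc q * j ≤ q * (X / q) := Nat.mul_le_mul_left q hj2
        _ ≤ X := Nat.mul_div_le X q
  rw [himg, Finset.sum_image (fun x _ y _ h => by
    exact Nat.eq_of_mul_eq_mul_left (by omega) h)]
  have : ∀ j ∈ Icc 1 (X / q), (1 / ((q * j : ℕ) : ℝ)) = (1/q) * (1/j) := by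
    intro j hj
    push_cast
    rw [one_div_mul_eq_div, div_div, mul_comm]
  rw [Finset.sum_congr rfl this, ← Finset.mul_sum]
  apply mul_le_mul_of_nonneg_left _ (by positivity)
  calc ∑ j ∈ Icc 1 (X/q), (1/(j:ℝ)) ≤ ∑ j ∈ Icc 1 X, (1/(j:ℝ)) := by
        apply Finset.sum_le_sum_of_subset_of_nonneg
        · exact Finset.Icc_subset_Icc_right (Nat.div_le_self X q)
        · intro i _ _; positivity
    _ ≤ 1 + Real.log X := Hle X


lemma gcd_sq (t m : ℕ) (ht : Squarefree t) : Nat.gcd t (m ^ 2) = Nat.gcd t m := by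
  apply Nat.dvd_antisymm
  · apply Nat.dvd_gcd (Nat.gcd_dvd_left _ _)
    have hsq : Squarefree (Nat.gcd t (m ^ 2)) := ht.squarefree_of_dvd (Nat.gcd_dvd_left _ _)
    exact (hsq.dvd_pow_iff_dvd two_ne_zero).mp (Nat.gcd_dvd_right _ _)
  · exact Nat.dvd_gcd (Nat.gcd_dvd_left _ _)
      ((Nat.gcd_dvd_right _ _).trans (dvd_pow_self m two_ne_zero))

lemma gcd_sum (X t : ℕ) (ht1 : 1 ≤ t) :
    ∑ m ∈ Icc 1 X, ((Nat.gcd t m : ℝ) / m)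
      ≤ (t.divisors.card : ℝ) * (1 + Real.log X) := by
  have step : ∀ m ∈ Icc 1 X, (Nat.gcd t m : ℝ) / m
      ≤ ∑ s ∈ t.divisors, (if s ∣ m then (s:ℝ)/m else 0) := by
    intro m hm
    have hmem : Nat.gcd t m ∈ t.divisors :=
      Nat.mem_divisors.mpr ⟨Nat.gcd_dvd_left _ _, by omega⟩
    have h := Finset.single_le_sum (f := fun s : ℕ => if s ∣ m then (s:ℝ)/m else 0)
      (fun s _ => by split <;> positivity) hmem
    rwa [if_pos (Nat.gcd_dvd_right t m)] at h
  calc ∑ m ∈ Icc 1 X, ((Nat.gcd t m : ℝ) / m)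
      ≤ ∑ m ∈ Icc 1 X, ∑ s ∈ t.divisors, (if s ∣ m then (s:ℝ)/m else 0) :=
        Finset.sum_le_sum step
    _ = ∑ s ∈ t.divisors, ∑ m ∈ Icc 1 X, (if s ∣ m then (s:ℝ)/m else 0) := Finset.sum_comm
    _ ≤ ∑ s ∈ t.divisors, (1 + Real.log X) := by
        apply Finset.sum_le_sum
        intro s hs
        have hs1 : 1 ≤ s := Nat.pos_of_mem_divisors hs
        have hspos : (0:ℝ) < s := by exact_mod_cast hs1
        rw [← Finset.sum_filter]
        have : ∀ m ∈ (Icc 1 X).filter (s ∣ ·), (s:ℝ)/m = (s:ℝ) * (1/m) := by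
          intro m _; ring
        rw [Finset.sum_congr rfl this, ← Finset.mul_sum]
        calc (s:ℝ) * ∑ m ∈ (Icc 1 X).filter (s ∣ ·), (1/(m:ℝ))
            ≤ (s:ℝ) * ((1/s) * (1 + Real.log X)) :=
              mul_le_mul_of_nonneg_left (harm_dvd X s hs1) (by positivity)
          _ = 1 + Real.log X := by field_simp
    _ = (t.divisors.card : ℝ) * (1 + Real.log X) := by
        rw [Finset.sum_const, nsmul_eq_mul]

lemma P_bound (X t : ℕ) (ht : Squarefree t) (ht1 : 1 ≤ t) :
    ∑ a ∈ (Icc 1 X).filter (t ∣ ·), (Nn a : ℝ)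
      ≤ ((X:ℝ) / t) * (t.divisors.card : ℝ) * (1 + Real.log X) := by
  have step1 : ∀ a ∈ (Icc 1 X).filter (t ∣ ·),
      (Nn a : ℝ) ≤ ∑ m ∈ Icc 1 X, (if m ^ 2 ∣ a then (m:ℝ) else 0) := by
    intro a ha
    rw [Finset.mem_filter, Finset.mem_Icc] at ha
    obtain ⟨⟨ha1, ha2⟩, -⟩ := ha
    have hane : a ≠ 0 := by omega
    have hmem : Nn a ∈ Icc 1 X := Finset.mem_Icc.mpr
      ⟨Nn_pos a, le_trans (Nat.le_of_dvd (by omega) (Nn_dvd a hane)) ha2⟩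
    have h := Finset.single_le_sum (f := fun m : ℕ => if m ^ 2 ∣ a then (m:ℝ) else 0)
      (fun i _ => by split <;> positivity) hmem
    rwa [if_pos (Nn_sq_dvd a hane)] at h
  have hcount : ∀ m : ℕ, ∑ a ∈ (Icc 1 X).filter (t ∣ ·), (if m ^ 2 ∣ a then (m:ℝ) else 0)
      = (((Icc 1 X).filter (Nat.lcm t (m^2) ∣ ·)).card : ℝ) * m := by
    intro m
    rw [← Finset.sum_filter, Finset.filter_filter]
    rw [Finset.filter_congr (q := (Nat.lcm t (m^2) ∣ ·))
      (fun a _ => by simp [Nat.lcm_dvd_iff])]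
    rw [Finset.sum_const, nsmul_eq_mul]
  have hterm : ∀ m ∈ Icc 1 X,
      (((Icc 1 X).filter (Nat.lcm t (m^2) ∣ ·)).card : ℝ) * m
        ≤ ((X:ℝ)/t) * ((Nat.gcd t m : ℝ) / m) := by
    intro m hm
    rw [Finset.mem_Icc] at hm
    have hm1 : (1:ℝ) ≤ m := by exact_mod_cast hm.1
    have hmpos : (0:ℝ) < m := by linarith
    have htpos : (0:ℝ) < t := by exact_mod_cast ht1
    have hgpos : (0:ℝ) < Nat.gcd t m := by
      have : 0 < Nat.gcd t m := Nat.gcd_pos_of_pos_left m ht1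
      exact_mod_cast this
    have h2 : ((Nat.lcm t (m^2) : ℕ):ℝ) = (t : ℝ) * m^2 / (Nat.gcd t m) := by
      have h := Nat.gcd_mul_lcm t (m^2)
      rw [gcd_sq t m ht] at h
      have : ((Nat.gcd t m : ℕ):ℝ) * ((Nat.lcm t (m^2) : ℕ):ℝ) = (t:ℝ) * (m:ℝ)^2 := by
        exact_mod_cast congrArg (Nat.cast : ℕ → ℝ) h
      field_simp
      linarith [this]
    have h1 : (((Icc 1 X).filter (Nat.lcm t (m^2) ∣ ·)).card : ℝ)
        ≤ (X:ℝ) / ((Nat.lcm t (m^2) : ℕ):ℝ) := by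
      rw [card_dvd_eq]
      exact_mod_cast Nat.cast_div_le
    calc (((Icc 1 X).filter (Nat.lcm t (m^2) ∣ ·)).card : ℝ) * m
        ≤ ((X:ℝ) / ((Nat.lcm t (m^2) : ℕ):ℝ)) * m :=
          mul_le_mul_of_nonneg_right h1 (by positivity)
      _ = ((X:ℝ)/t) * ((Nat.gcd t m : ℝ) / m) := by
          rw [h2]
          field_simp
  calc ∑ a ∈ (Icc 1 X).filter (t ∣ ·), (Nn a : ℝ)
      ≤ ∑ a ∈ (Icc 1 X).filter (t ∣ ·), ∑ m ∈ Icc 1 X, (if m ^ 2 ∣ a then (m:ℝ) else 0) :=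
        Finset.sum_le_sum step1
    _ = ∑ m ∈ Icc 1 X, ∑ a ∈ (Icc 1 X).filter (t ∣ ·), (if m ^ 2 ∣ a then (m:ℝ) else 0) :=
        Finset.sum_comm
    _ ≤ ∑ m ∈ Icc 1 X, ((X:ℝ)/t) * ((Nat.gcd t m : ℝ) / m) := by
        apply Finset.sum_le_sum
        intro m hm
        rw [hcount m]
        exact hterm m hm
    _ = ((X:ℝ)/t) * ∑ m ∈ Icc 1 X, ((Nat.gcd t m : ℝ) / m) := by rw [← Finset.mul_sum]
    _ ≤ ((X:ℝ)/t) * ((t.divisors.card : ℝ) * (1 + Real.log X)) := by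
        apply mul_le_mul_of_nonneg_left (gcd_sum X t ht1) (by positivity)
    _ = ((X:ℝ) / t) * (t.divisors.card : ℝ) * (1 + Real.log X) := by ring


lemma gcd_div_sum (Y : ℕ) (hY : 1 ≤ Y) :
    ∑ s1 ∈ Icc 1 Y, ∑ s2 ∈ Icc 1 Y, ((Nat.gcd s1 s2 : ℝ) / ((s1:ℝ) * s2))
      ≤ (1 + Real.log Y)^3 := by
  set L := 1 + Real.log Y with hLdef
  have hL0 : 0 ≤ L := log_nonneg' Y hY
  have hpoint : ∀ s1 ∈ Icc 1 Y, ∀ s2 ∈ Icc 1 Y,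
      ((Nat.gcd s1 s2 : ℝ) / ((s1:ℝ) * s2)) ≤ ∑ u ∈ Icc 1 Y,
        (u:ℝ) * (if u ∣ s1 then 1/(s1:ℝ) else 0) * (if u ∣ s2 then 1/(s2:ℝ) else 0) := by
    intro s1 hs1 s2 hs2
    rw [Finset.mem_Icc] at hs1 hs2
    have hg1 : 1 ≤ Nat.gcd s1 s2 := Nat.gcd_pos_of_pos_left _ (by omega)
    have hgY : Nat.gcd s1 s2 ≤ Y :=
      le_trans (Nat.le_of_dvd (by omega) (Nat.gcd_dvd_left _ _)) hs1.2
    have hmem : Nat.gcd s1 s2 ∈ Icc 1 Y := Finset.mem_Icc.mpr ⟨hg1, hgY⟩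
    have h := Finset.single_le_sum (f := fun u : ℕ =>
      (u:ℝ) * (if u ∣ s1 then 1/(s1:ℝ) else 0) * (if u ∣ s2 then 1/(s2:ℝ) else 0))
      (fun u _ => by split <;> split <;> positivity) hmem
    rw [if_pos (Nat.gcd_dvd_left s1 s2), if_pos (Nat.gcd_dvd_right s1 s2)] at h
    refine le_trans (le_of_eq ?_) h
    have h1 : (s1:ℝ) ≠ 0 := by
      have : (1:ℝ) ≤ s1 := by exact_mod_cast hs1.1
      linarith
    have h2 : (s2:ℝ) ≠ 0 := by
      have : (1:ℝ) ≤ s2 := by exact_mod_cast hs2.1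
      linarith
    field_simp
  calc ∑ s1 ∈ Icc 1 Y, ∑ s2 ∈ Icc 1 Y, ((Nat.gcd s1 s2 : ℝ) / ((s1:ℝ) * s2))
      ≤ ∑ s1 ∈ Icc 1 Y, ∑ s2 ∈ Icc 1 Y, ∑ u ∈ Icc 1 Y,
          (u:ℝ) * (if u ∣ s1 then 1/(s1:ℝ) else 0) * (if u ∣ s2 then 1/(s2:ℝ) else 0) := by
        apply Finset.sum_le_sum
        intro s1 hs1
        exact Finset.sum_le_sum (fun s2 hs2 => hpoint s1 hs1 s2 hs2)
    _ = ∑ u ∈ Icc 1 Y, ∑ s1 ∈ Icc 1 Y, ∑ s2 ∈ Icc 1 Y,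
          (u:ℝ) * (if u ∣ s1 then 1/(s1:ℝ) else 0) * (if u ∣ s2 then 1/(s2:ℝ) else 0) := by
        rw [show (∑ s1 ∈ Icc 1 Y, ∑ s2 ∈ Icc 1 Y, ∑ u ∈ Icc 1 Y,
            (u:ℝ) * (if u ∣ s1 then 1/(s1:ℝ) else 0) * (if u ∣ s2 then 1/(s2:ℝ) else 0))
          = ∑ s1 ∈ Icc 1 Y, ∑ u ∈ Icc 1 Y, ∑ s2 ∈ Icc 1 Y,
            (u:ℝ) * (if u ∣ s1 then 1/(s1:ℝ) else 0) * (if u ∣ s2 then 1/(s2:ℝ) else 0) from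
          Finset.sum_congr rfl (fun s1 _ => Finset.sum_comm)]
        exact Finset.sum_comm
    _ = ∑ u ∈ Icc 1 Y, (u:ℝ) * ((∑ s1 ∈ Icc 1 Y, if u ∣ s1 then 1/(s1:ℝ) else 0)
          * (∑ s2 ∈ Icc 1 Y, if u ∣ s2 then 1/(s2:ℝ) else 0)) := by
        apply Finset.sum_congr rfl
        intro u _
        rw [Finset.sum_mul_sum, Finset.mul_sum]
        apply Finset.sum_congr rfl
        intro s1 _
        rw [Finset.mul_sum]
        apply Finset.sum_congr rfl
        intro s2 _
        ring
    _ ≤ ∑ u ∈ Icc 1 Y, (u:ℝ) * (((1/(u:ℝ)) * L) * ((1/(u:ℝ)) * L)) := by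
        apply Finset.sum_le_sum
        intro u hu
        rw [Finset.mem_Icc] at hu
        have hu1 : 1 ≤ u := hu.1
        have hupos : (0:ℝ) < u := by exact_mod_cast hu1
        have hA : (∑ s1 ∈ Icc 1 Y, if u ∣ s1 then 1/(s1:ℝ) else 0) ≤ (1/(u:ℝ)) * L := by
          rw [← Finset.sum_filter]
          exact harm_dvd Y u hu1
        have hA0 : (0:ℝ) ≤ ∑ s1 ∈ Icc 1 Y, if u ∣ s1 then 1/(s1:ℝ) else 0 :=
          Finset.sum_nonneg (fun s1 _ => by split <;> positivity)
        apply mul_le_mul_of_nonneg_left _ (le_of_lt hupos)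
        exact mul_le_mul hA hA hA0 (by positivity)
    _ = L^2 * ∑ u ∈ Icc 1 Y, (1/(u:ℝ)) := by
        rw [Finset.mul_sum]
        apply Finset.sum_congr rfl
        intro u hu
        rw [Finset.mem_Icc] at hu
        have : (u:ℝ) ≠ 0 := by
          have : (1:ℝ) ≤ u := by exact_mod_cast hu.1
          linarith
        field_simp
    _ ≤ L^2 * L := mul_le_mul_of_nonneg_left (Hle Y) (by positivity)
    _ = L^3 := by ring

lemma tau_sq_sum (Y : ℕ) (hY : 1 ≤ Y) :
    ∑ t ∈ Icc 1 Y, (((t.divisors.card : ℝ))^2 / t) ≤ (1 + Real.log Y)^4 := by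
  set L := 1 + Real.log Y with hLdef
  have hL0 : 0 ≤ L := log_nonneg' Y hY
  have hcard : ∀ t ∈ Icc 1 Y,
      (t.divisors.card : ℝ) = ∑ s ∈ Icc 1 Y, (if s ∣ t then (1:ℝ) else 0) := by
    intro t ht
    rw [Finset.mem_Icc] at ht
    have hfil : (Icc 1 Y).filter (· ∣ t) = t.divisors := by
      ext s
      simp only [Finset.mem_filter, Finset.mem_Icc, Nat.mem_divisors]
      constructor
      · rintro ⟨_, hdvd⟩; exact ⟨hdvd, by omega⟩
      · rintro ⟨hdvd, _⟩
        have hs1 : 1 ≤ s := Nat.pos_of_dvd_of_pos hdvd (by omega)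
        have hst : s ≤ t := Nat.le_of_dvd (by omega) hdvd
        exact ⟨⟨hs1, by omega⟩, hdvd⟩
    rw [Finset.sum_boole, hfil]
  have hexp : ∀ t ∈ Icc 1 Y, ((t.divisors.card : ℝ))^2 / t
      = ∑ s1 ∈ Icc 1 Y, ∑ s2 ∈ Icc 1 Y, (if s1 ∣ t ∧ s2 ∣ t then 1/(t:ℝ) else 0) := by
    intro t ht
    rw [hcard t ht, sq, Finset.sum_mul_sum, Finset.sum_div]
    apply Finset.sum_congr rfl
    intro s1 _
    rw [Finset.sum_div]
    apply Finset.sum_congr rfl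
    intro s2 _
    by_cases h1 : s1 ∣ t <;> by_cases h2 : s2 ∣ t <;> simp [h1, h2]
  calc ∑ t ∈ Icc 1 Y, (((t.divisors.card : ℝ))^2 / t)
      = ∑ t ∈ Icc 1 Y, ∑ s1 ∈ Icc 1 Y, ∑ s2 ∈ Icc 1 Y,
          (if s1 ∣ t ∧ s2 ∣ t then 1/(t:ℝ) else 0) := Finset.sum_congr rfl hexp
    _ = ∑ s1 ∈ Icc 1 Y, ∑ s2 ∈ Icc 1 Y, ∑ t ∈ Icc 1 Y,
          (if s1 ∣ t ∧ s2 ∣ t then 1/(t:ℝ) else 0) := by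
        rw [Finset.sum_comm]
        exact Finset.sum_congr rfl (fun s1 _ => Finset.sum_comm)
    _ ≤ ∑ s1 ∈ Icc 1 Y, ∑ s2 ∈ Icc 1 Y, ((Nat.gcd s1 s2 : ℝ) / ((s1:ℝ) * s2)) * L := by
        apply Finset.sum_le_sum
        intro s1 hs1
        apply Finset.sum_le_sum
        intro s2 hs2
        rw [Finset.mem_Icc] at hs1 hs2
        have hl1 : 1 ≤ Nat.lcm s1 s2 :=
          Nat.pos_of_ne_zero (Nat.lcm_ne_zero (by omega) (by omega))
        have hstep : ∑ t ∈ Icc 1 Y, (if s1 ∣ t ∧ s2 ∣ t then 1/(t:ℝ) else 0)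
            ≤ (1/(Nat.lcm s1 s2 : ℝ)) * L := by
          rw [← Finset.sum_filter]
          rw [Finset.filter_congr (q := (Nat.lcm s1 s2 ∣ ·))
            (fun t _ => by simp [Nat.lcm_dvd_iff])]
          exact harm_dvd Y (Nat.lcm s1 s2) hl1
        refine le_trans hstep (le_of_eq ?_)
        have hgl : ((Nat.gcd s1 s2 : ℕ):ℝ) * ((Nat.lcm s1 s2 : ℕ):ℝ) = (s1:ℝ) * s2 := by
          exact_mod_cast congrArg (Nat.cast : ℕ → ℝ) (Nat.gcd_mul_lcm s1 s2)
        have hlne : ((Nat.lcm s1 s2 : ℕ):ℝ) ≠ 0 := by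
          have : (1:ℝ) ≤ ((Nat.lcm s1 s2 : ℕ):ℝ) := by exact_mod_cast hl1
          linarith
        have hs1ne : (s1:ℝ) ≠ 0 := by
          have : (1:ℝ) ≤ (s1:ℝ) := by exact_mod_cast hs1.1
          linarith
        have hs2ne : (s2:ℝ) ≠ 0 := by
          have : (1:ℝ) ≤ (s2:ℝ) := by exact_mod_cast hs2.1
          linarith
        have heq : (1:ℝ)/((Nat.lcm s1 s2 : ℕ):ℝ) = (Nat.gcd s1 s2 : ℝ)/((s1:ℝ)*s2) := by
          rw [div_eq_div_iff (by positivity) (by positivity)]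
          linarith [hgl]
        rw [heq]
    _ = (∑ s1 ∈ Icc 1 Y, ∑ s2 ∈ Icc 1 Y, ((Nat.gcd s1 s2 : ℝ) / ((s1:ℝ) * s2))) * L := by
        rw [Finset.sum_mul]
        exact Finset.sum_congr rfl (fun s1 _ => by rw [Finset.sum_mul])
    _ ≤ L^3 * L := by
        apply mul_le_mul_of_nonneg_right (gcd_div_sum Y hY) hL0
    _ = L^4 := by ring


lemma main_nat (A B : ℕ) (hA : 1 ≤ A) (hB : 1 ≤ B) :
    ∑ a ∈ Icc 1 A, ∑ b ∈ Icc 1 B, (Nn (a * b ^ 3) : ℝ)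
      ≤ (A:ℝ) * (B:ℝ)^2 * (1 + Real.log A) * (1 + Real.log B)^5 := by
  set LA := 1 + Real.log A with hLAdef
  set LB := 1 + Real.log B with hLBdef
  have hLA0 : 0 ≤ LA := log_nonneg' A hA
  have hLB0 : 0 ≤ LB := log_nonneg' B hB
  have hA1 : (1:ℝ) ≤ A := by exact_mod_cast hA
  have hB1 : (1:ℝ) ≤ B := by exact_mod_cast hB
  have hpoint : ∀ a ∈ Icc 1 A, ∀ b ∈ Icc 1 B, (Nn (a * b ^ 3) : ℝ)
      ≤ ∑ t ∈ Icc 1 B, (if t ∣ a ∧ t ∣ b ∧ Squarefree t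
          then (t:ℝ) * (Nn a : ℝ) * ((b:ℝ) * (Nn b : ℝ)) else 0) := by
    intro a ha b hb
    rw [Finset.mem_Icc] at ha hb
    have hane : a ≠ 0 := by omega
    have hbne : b ≠ 0 := by omega
    have ht0 : gab a b ∈ Icc 1 B := by
      rw [Finset.mem_Icc]
      exact ⟨gab_pos a b, le_trans (Nat.le_of_dvd (by omega) (gab_dvd_right a b)) hb.2⟩
    have h := Finset.single_le_sum (f := fun t : ℕ => if t ∣ a ∧ t ∣ b ∧ Squarefree t
        then (t:ℝ) * (Nn a : ℝ) * ((b:ℝ) * (Nn b : ℝ)) else 0)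
      (fun t _ => by split <;> positivity) ht0
    rw [if_pos ⟨gab_dvd_left a b, gab_dvd_right a b, gab_squarefree a b⟩] at h
    refine le_trans ?_ h
    have hkey := Nn_mul_cube_le a b hane hbne
    have : (Nn (a * b ^ 3) : ℝ) ≤ ((Nn a * (b * Nn b) * gab a b : ℕ) : ℝ) := by
      exact_mod_cast hkey
    refine le_trans this (le_of_eq ?_)
    push_cast
    ring
  have hfactor : ∀ t ∈ Icc 1 B,
      (∑ a ∈ Icc 1 A, ∑ b ∈ Icc 1 B, (if t ∣ a ∧ t ∣ b ∧ Squarefree t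
          then (t:ℝ) * (Nn a : ℝ) * ((b:ℝ) * (Nn b : ℝ)) else 0))
      = (if Squarefree t then (t:ℝ)
          * (∑ a ∈ (Icc 1 A).filter (t ∣ ·), (Nn a : ℝ))
          * (∑ b ∈ (Icc 1 B).filter (t ∣ ·), ((b:ℝ) * (Nn b : ℝ))) else 0) := by
    intro t _
    by_cases hsq : Squarefree t
    · rw [if_pos hsq]
      have hterm : ∀ a ∈ Icc 1 A, ∀ b ∈ Icc 1 B,
          (if t ∣ a ∧ t ∣ b ∧ Squarefree t
            then (t:ℝ) * (Nn a : ℝ) * ((b:ℝ) * (Nn b : ℝ)) else 0)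
          = (t:ℝ) * ((if t ∣ a then (Nn a : ℝ) else 0)
              * (if t ∣ b then (b:ℝ) * (Nn b : ℝ) else 0)) := by
        intro a _ b _
        by_cases h1 : t ∣ a <;> by_cases h2 : t ∣ b <;> simp [h1, h2, hsq] <;> ring
      rw [Finset.sum_congr rfl (fun a ha => Finset.sum_congr rfl (fun b hb => hterm a ha b hb))]
      rw [show (∑ a ∈ Icc 1 A, ∑ b ∈ Icc 1 B, (t:ℝ) * ((if t ∣ a then (Nn a : ℝ) else 0)
            * (if t ∣ b then (b:ℝ) * (Nn b : ℝ) else 0)))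
          = (t:ℝ) * ∑ a ∈ Icc 1 A, ∑ b ∈ Icc 1 B, ((if t ∣ a then (Nn a : ℝ) else 0)
            * (if t ∣ b then (b:ℝ) * (Nn b : ℝ) else 0)) from by
        rw [Finset.mul_sum]
        exact Finset.sum_congr rfl (fun a _ => by rw [Finset.mul_sum])]
      rw [← Finset.sum_mul_sum, ← Finset.sum_filter, ← Finset.sum_filter]
      ring
    · rw [if_neg hsq]
      apply Finset.sum_eq_zero
      intro a _
      apply Finset.sum_eq_zero
      intro b _
      rw [if_neg (by tauto)]
  have hbound : ∀ t ∈ Icc 1 B,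
      (if Squarefree t then (t:ℝ)
          * (∑ a ∈ (Icc 1 A).filter (t ∣ ·), (Nn a : ℝ))
          * (∑ b ∈ (Icc 1 B).filter (t ∣ ·), ((b:ℝ) * (Nn b : ℝ))) else 0)
      ≤ (A:ℝ) * (B:ℝ)^2 * LA * LB * (((t.divisors.card : ℝ))^2 / t) := by
    intro t ht
    rw [Finset.mem_Icc] at ht
    have ht1 : 1 ≤ t := ht.1
    have htpos : (0:ℝ) < t := by exact_mod_cast ht1
    have htau0 : (0:ℝ) ≤ (t.divisors.card : ℝ) := by positivity
    by_cases hsq : Squarefree t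
    · rw [if_pos hsq]
      have hP := P_bound A t hsq ht1
      have hQ1 : ∑ b ∈ (Icc 1 B).filter (t ∣ ·), ((b:ℝ) * (Nn b : ℝ))
          ≤ (B:ℝ) * ∑ b ∈ (Icc 1 B).filter (t ∣ ·), (Nn b : ℝ) := by
        rw [Finset.mul_sum]
        apply Finset.sum_le_sum
        intro b hb
        rw [Finset.mem_filter, Finset.mem_Icc] at hb
        have : (b:ℝ) ≤ B := by exact_mod_cast hb.1.2
        apply mul_le_mul_of_nonneg_right this (by positivity)
      have hQ2 := P_bound B t hsq ht1
      have hQ : ∑ b ∈ (Icc 1 B).filter (t ∣ ·), ((b:ℝ) * (Nn b : ℝ))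
          ≤ (B:ℝ) * (((B:ℝ) / t) * (t.divisors.card : ℝ) * LB) :=
        le_trans hQ1 (mul_le_mul_of_nonneg_left hQ2 (by positivity))
      have hP0 : (0:ℝ) ≤ ∑ a ∈ (Icc 1 A).filter (t ∣ ·), (Nn a : ℝ) :=
        Finset.sum_nonneg (fun a _ => by positivity)
      have hQ0 : (0:ℝ) ≤ ∑ b ∈ (Icc 1 B).filter (t ∣ ·), ((b:ℝ) * (Nn b : ℝ)) :=
        Finset.sum_nonneg (fun b _ => by positivity)
      calc (t:ℝ) * (∑ a ∈ (Icc 1 A).filter (t ∣ ·), (Nn a : ℝ))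
            * (∑ b ∈ (Icc 1 B).filter (t ∣ ·), ((b:ℝ) * (Nn b : ℝ)))
          ≤ (t:ℝ) * (((A:ℝ) / t) * (t.divisors.card : ℝ) * LA)
            * ((B:ℝ) * (((B:ℝ) / t) * (t.divisors.card : ℝ) * LB)) := by
            apply mul_le_mul
            · exact mul_le_mul_of_nonneg_left hP (le_of_lt htpos)
            · exact hQ
            · exact hQ0
            · positivity
        _ = (A:ℝ) * (B:ℝ)^2 * LA * LB * (((t.divisors.card : ℝ))^2 / t) := by
            field_simp
    · rw [if_neg hsq]
      positivity
  calc ∑ a ∈ Icc 1 A, ∑ b ∈ Icc 1 B, (Nn (a * b ^ 3) : ℝ)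
      ≤ ∑ a ∈ Icc 1 A, ∑ b ∈ Icc 1 B, ∑ t ∈ Icc 1 B,
          (if t ∣ a ∧ t ∣ b ∧ Squarefree t
            then (t:ℝ) * (Nn a : ℝ) * ((b:ℝ) * (Nn b : ℝ)) else 0) := by
        apply Finset.sum_le_sum
        intro a ha
        exact Finset.sum_le_sum (fun b hb => hpoint a ha b hb)
    _ = ∑ t ∈ Icc 1 B, ∑ a ∈ Icc 1 A, ∑ b ∈ Icc 1 B,
          (if t ∣ a ∧ t ∣ b ∧ Squarefree t
            then (t:ℝ) * (Nn a : ℝ) * ((b:ℝ) * (Nn b : ℝ)) else 0) := by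
        rw [show (∑ a ∈ Icc 1 A, ∑ b ∈ Icc 1 B, ∑ t ∈ Icc 1 B,
            (if t ∣ a ∧ t ∣ b ∧ Squarefree t
              then (t:ℝ) * (Nn a : ℝ) * ((b:ℝ) * (Nn b : ℝ)) else 0))
          = ∑ a ∈ Icc 1 A, ∑ t ∈ Icc 1 B, ∑ b ∈ Icc 1 B,
            (if t ∣ a ∧ t ∣ b ∧ Squarefree t
              then (t:ℝ) * (Nn a : ℝ) * ((b:ℝ) * (Nn b : ℝ)) else 0) from
          Finset.sum_congr rfl (fun a _ => Finset.sum_comm)]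
        exact Finset.sum_comm
    _ = ∑ t ∈ Icc 1 B, (if Squarefree t then (t:ℝ)
          * (∑ a ∈ (Icc 1 A).filter (t ∣ ·), (Nn a : ℝ))
          * (∑ b ∈ (Icc 1 B).filter (t ∣ ·), ((b:ℝ) * (Nn b : ℝ))) else 0) :=
        Finset.sum_congr rfl hfactor
    _ ≤ ∑ t ∈ Icc 1 B, (A:ℝ) * (B:ℝ)^2 * LA * LB * (((t.divisors.card : ℝ))^2 / t) :=
        Finset.sum_le_sum hbound
    _ = (A:ℝ) * (B:ℝ)^2 * LA * LB * ∑ t ∈ Icc 1 B, (((t.divisors.card : ℝ))^2 / t) := by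
        rw [← Finset.mul_sum]
    _ ≤ (A:ℝ) * (B:ℝ)^2 * LA * LB * LB^4 := by
        apply mul_le_mul_of_nonneg_left (tau_sq_sum B hB) (by positivity)
    _ = (A:ℝ) * (B:ℝ)^2 * LA * LB^5 := by ring


lemma one_add_log_le (x δ : ℝ) (hx : 1 ≤ x) (hδ : 0 < δ) :
    1 + Real.log x ≤ (1 + 1/δ) * x ^ δ := by
  have hx0 : 0 < x := by linarith
  have h1 : Real.log (x ^ δ) = δ * Real.log x := Real.log_rpow hx0 δ
  have h2 : Real.log (x ^ δ) ≤ x ^ δ - 1 :=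
    Real.log_le_sub_one_of_pos (Real.rpow_pos_of_pos hx0 δ)
  have h3 : 1 ≤ x ^ δ := Real.one_le_rpow hx hδ.le
  have h4 : Real.log x ≤ x ^ δ / δ := by
    rw [le_div_iff₀ hδ]
    calc Real.log x * δ = δ * Real.log x := mul_comm _ _
      _ = Real.log (x ^ δ) := h1.symm
      _ ≤ x ^ δ := by linarith
  have h5 : (1 + 1/δ) * x ^ δ = x ^ δ + x ^ δ / δ := by
    field_simp
  linarith

/-- `N` on integers agrees with `Nn` on `natAbs`. -/
lemma N_eq_Nn (k : ℤ) : N k = Nn k.natAbs := rfl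

theorem sum_N_bound :
    ∀ ε > (0 : ℝ), ∃ C > (0 : ℝ), ∀ D R : ℝ, 1 ≤ D → 1 ≤ R →
      (∑' dr : ℤ × ℤ,
          if 0 < |dr.1| ∧ (|dr.1| : ℝ) ≤ D ∧ 0 < |dr.2| ∧ (|dr.2| : ℝ) ≤ R then
            (N (dr.1 * dr.2 ^ 3) : ℝ)
          else 0)
        ≤ C * D ^ ((1 : ℝ) + ε) * R ^ ((2 : ℝ) + ε) := by
  intro ε hε
  set δ := ε / 5 with hδdef
  have hδ : 0 < δ := by positivity
  refine ⟨4 * (1 + 1/δ)^6, by positivity, ?_⟩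
  intro D R hD hR
  have hD0 : (0:ℝ) < D := by linarith
  have hR0 : (0:ℝ) < R := by linarith
  set A := ⌊D⌋₊ with hAdef
  set B := ⌊R⌋₊ with hBdef
  have hA1 : 1 ≤ A := Nat.le_floor (by exact_mod_cast hD)
  have hB1 : 1 ≤ B := Nat.le_floor (by exact_mod_cast hR)
  have hAD : (A:ℝ) ≤ D := Nat.floor_le hD0.le
  have hBR : (B:ℝ) ≤ R := Nat.floor_le hR0.le
  set f : ℤ × ℤ → ℝ := fun dr =>
    if 0 < |dr.1| ∧ (|dr.1| : ℝ) ≤ D ∧ 0 < |dr.2| ∧ (|dr.2| : ℝ) ≤ R then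
      (N (dr.1 * dr.2 ^ 3) : ℝ) else 0 with hfdef
  set s : Finset (ℤ × ℤ) :=
    ((Finset.Icc (-(A:ℤ)) A) ×ˢ (Finset.Icc (-(B:ℤ)) B)).filter
      (fun dr => dr.1 ≠ 0 ∧ dr.2 ≠ 0) with hsdef
  have habs_cast : ∀ z : ℤ, |((z:ℤ):ℝ)| = ((z.natAbs : ℕ):ℝ) := by
    intro z
    rw [Nat.cast_natAbs]
    exact Int.cast_abs.symm
  have hsupp : ∀ dr ∉ s, f dr = 0 := by
    intro dr hdr
    rw [hfdef]
    dsimp only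
    split_ifs with hc
    · exfalso
      obtain ⟨h1, h2, h3, h4⟩ := hc
      apply hdr
      rw [hsdef, Finset.mem_filter, Finset.mem_product, Finset.mem_Icc, Finset.mem_Icc]
      rw [habs_cast dr.1] at h2
      rw [habs_cast dr.2] at h4
      have hd1 : dr.1.natAbs ≤ A := Nat.le_floor h2
      have hd2 : dr.2.natAbs ≤ B := Nat.le_floor h4
      have hne1 : dr.1 ≠ 0 := by
        intro h0; rw [h0] at h1; simp at h1
      have hne2 : dr.2 ≠ 0 := by
        intro h0; rw [h0] at h3; simp at h3
      refine ⟨⟨⟨?_, ?_⟩, ?_, ?_⟩, hne1, hne2⟩ <;> omega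
    · rfl
  have htsum : (∑' dr : ℤ × ℤ, f dr) = ∑ dr ∈ s, f dr := tsum_eq_sum hsupp
  set t : Finset (ℕ × ℕ) := (Finset.Icc 1 A) ×ˢ (Finset.Icc 1 B) with htdef
  have hmaps : ∀ dr ∈ s, (dr.1.natAbs, dr.2.natAbs) ∈ t := by
    intro dr hdr
    rw [hsdef, Finset.mem_filter, Finset.mem_product, Finset.mem_Icc, Finset.mem_Icc] at hdr
    obtain ⟨⟨⟨hl1, hr1⟩, hl2, hr2⟩, hne1, hne2⟩ := hdr
    rw [htdef, Finset.mem_product, Finset.mem_Icc, Finset.mem_Icc]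
    refine ⟨⟨?_, ?_⟩, ?_, ?_⟩ <;> omega
  have hfiber : ∀ y ∈ t, ∑ dr ∈ s.filter (fun dr => (dr.1.natAbs, dr.2.natAbs) = y), f dr
      ≤ 4 * (Nn (y.1 * y.2 ^ 3) : ℝ) := by
    intro y hy
    have hbound : ∀ dr ∈ s.filter (fun dr => (dr.1.natAbs, dr.2.natAbs) = y),
        f dr ≤ (Nn (y.1 * y.2 ^ 3) : ℝ) := by
      intro dr hdr
      rw [Finset.mem_filter] at hdr
      have hy1 : dr.1.natAbs = y.1 := by
        have := congrArg Prod.fst hdr.2; simpa using this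
      have hy2 : dr.2.natAbs = y.2 := by
        have := congrArg Prod.snd hdr.2; simpa using this
      rw [hfdef]
      dsimp only
      split_ifs with hc
      · apply le_of_eq
        congr 1
        rw [N_eq_Nn]
        congr 1
        rw [Int.natAbs_mul, Int.natAbs_pow, hy1, hy2]
      · positivity
    have hcard : (s.filter (fun dr => (dr.1.natAbs, dr.2.natAbs) = y)).card ≤ 4 := by
      have hsub : s.filter (fun dr => (dr.1.natAbs, dr.2.natAbs) = y) ⊆
          {((y.1:ℤ), (y.2:ℤ)), ((y.1:ℤ), -(y.2:ℤ)), (-(y.1:ℤ), (y.2:ℤ)), (-(y.1:ℤ), -(y.2:ℤ))} := by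
        intro dr hdr
        rw [Finset.mem_filter] at hdr
        have hy1 : dr.1.natAbs = y.1 := by
          have := congrArg Prod.fst hdr.2; simpa using this
        have hy2 : dr.2.natAbs = y.2 := by
          have := congrArg Prod.snd hdr.2; simpa using this
        rcases Int.natAbs_eq_iff.mp hy1 with h1 | h1 <;>
          rcases Int.natAbs_eq_iff.mp hy2 with h2 | h2 <;>
            simp only [Finset.mem_insert, Finset.mem_singleton, Prod.ext_iff] <;> tauto
      calc (s.filter (fun dr => (dr.1.natAbs, dr.2.natAbs) = y)).card
          ≤ ({((y.1:ℤ), (y.2:ℤ)), ((y.1:ℤ), -(y.2:ℤ)), (-(y.1:ℤ), (y.2:ℤ)),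
              (-(y.1:ℤ), -(y.2:ℤ))} : Finset (ℤ × ℤ)).card := Finset.card_le_card hsub
        _ ≤ 4 := by
            apply le_trans (Finset.card_insert_le _ _)
            have h2 := Finset.card_insert_le ((y.1:ℤ), -(y.2:ℤ))
              ({(-(y.1:ℤ), (y.2:ℤ)), (-(y.1:ℤ), -(y.2:ℤ))} : Finset (ℤ × ℤ))
            have h3 := Finset.card_insert_le (-(y.1:ℤ), (y.2:ℤ))
              ({(-(y.1:ℤ), -(y.2:ℤ))} : Finset (ℤ × ℤ))
            simp only [Finset.card_singleton] at *
            omega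
    calc ∑ dr ∈ s.filter (fun dr => (dr.1.natAbs, dr.2.natAbs) = y), f dr
        ≤ (s.filter (fun dr => (dr.1.natAbs, dr.2.natAbs) = y)).card
            • (Nn (y.1 * y.2 ^ 3) : ℝ) := Finset.sum_le_card_nsmul _ _ _ hbound
      _ ≤ 4 * (Nn (y.1 * y.2 ^ 3) : ℝ) := by
          rw [nsmul_eq_mul]
          apply mul_le_mul_of_nonneg_right _ (by positivity)
          exact_mod_cast hcard
  have hstep1 : (∑' dr : ℤ × ℤ, f dr) ≤ 4 * ∑ a ∈ Icc 1 A, ∑ b ∈ Icc 1 B, (Nn (a * b ^ 3) : ℝ) := by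
    rw [htsum, ← Finset.sum_fiberwise_of_maps_to hmaps f]
    calc ∑ y ∈ t, ∑ dr ∈ s.filter (fun dr => (dr.1.natAbs, dr.2.natAbs) = y), f dr
        ≤ ∑ y ∈ t, 4 * (Nn (y.1 * y.2 ^ 3) : ℝ) := Finset.sum_le_sum hfiber
      _ = 4 * ∑ y ∈ t, (Nn (y.1 * y.2 ^ 3) : ℝ) := by rw [Finset.mul_sum]
      _ = 4 * ∑ a ∈ Icc 1 A, ∑ b ∈ Icc 1 B, (Nn (a * b ^ 3) : ℝ) := by
          rw [htdef, Finset.sum_product]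
  have hmain := main_nat A B hA1 hB1
  -- numeric glue
  have hA1R : (1:ℝ) ≤ A := by exact_mod_cast hA1
  have hB1R : (1:ℝ) ≤ B := by exact_mod_cast hB1
  have hLA : 1 + Real.log A ≤ (1 + 1/δ) * D ^ δ := by
    have h1 : Real.log (A:ℝ) ≤ Real.log D := Real.log_le_log (by linarith) hAD
    have h2 := one_add_log_le D δ hD hδ
    linarith
  have hLB : 1 + Real.log B ≤ (1 + 1/δ) * R ^ δ := by
    have h1 : Real.log (B:ℝ) ≤ Real.log R := Real.log_le_log (by linarith) hBR
    have h2 := one_add_log_le R δ hR hδ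
    linarith
  have hLA0 : (0:ℝ) ≤ 1 + Real.log A := log_nonneg' A hA1
  have hLB0 : (0:ℝ) ≤ 1 + Real.log B := log_nonneg' B hB1
  have hDδ0 : (0:ℝ) ≤ D ^ δ := (Real.rpow_pos_of_pos hD0 δ).le
  have hRδ0 : (0:ℝ) ≤ R ^ δ := (Real.rpow_pos_of_pos hR0 δ).le
  have hkey : (A:ℝ) * (B:ℝ)^2 * (1 + Real.log A) * (1 + Real.log B)^5
      ≤ D * R^2 * ((1 + 1/δ) * D ^ δ) * ((1 + 1/δ) * R ^ δ)^5 := by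
    have hB2 : (B:ℝ)^2 ≤ R^2 := by
      apply pow_le_pow_left₀ (by positivity) hBR
    have hLB5 : (1 + Real.log B)^5 ≤ ((1 + 1/δ) * R ^ δ)^5 :=
      pow_le_pow_left₀ hLB0 hLB 5
    have m1 : (A:ℝ) * (B:ℝ)^2 ≤ D * R^2 :=
      mul_le_mul hAD hB2 (by positivity) (by linarith)
    have m2 : (A:ℝ) * (B:ℝ)^2 * (1 + Real.log A) ≤ D * R^2 * ((1 + 1/δ) * D ^ δ) :=
      mul_le_mul m1 hLA hLA0 (by positivity)
    exact mul_le_mul m2 hLB5 (by positivity) (by positivity)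
  have hrw : D * R^2 * ((1 + 1/δ) * D ^ δ) * ((1 + 1/δ) * R ^ δ)^5
      = (1 + 1/δ)^6 * ((D * D ^ δ) * (R^2 * (R ^ δ)^5)) := by ring
  have hDD : D * D ^ δ = D ^ ((1:ℝ) + δ) := by
    rw [Real.rpow_add hD0, Real.rpow_one]
  have hRR : R^2 * (R ^ δ)^5 = R ^ ((2:ℝ) + ε) := by
    have e1 : (R:ℝ)^(2:ℕ) = R ^ ((2:ℕ):ℝ) := (Real.rpow_natCast R 2).symm
    have e2 : (R ^ δ)^(5:ℕ) = R ^ (δ * (5:ℕ)) := by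
      rw [Real.rpow_mul hR0.le, Real.rpow_natCast]
    rw [e1, e2, ← Real.rpow_add hR0]
    norm_num
    rw [hδdef]
    ring_nf
  have hDD2 : D ^ ((1:ℝ) + δ) ≤ D ^ ((1:ℝ) + ε) := by
    apply Real.rpow_le_rpow_of_exponent_le hD
    rw [hδdef]
    linarith
  calc (∑' dr : ℤ × ℤ, f dr)
      ≤ 4 * ∑ a ∈ Icc 1 A, ∑ b ∈ Icc 1 B, (Nn (a * b ^ 3) : ℝ) := hstep1
    _ ≤ 4 * ((A:ℝ) * (B:ℝ)^2 * (1 + Real.log A) * (1 + Real.log B)^5) := by linarith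
    _ ≤ 4 * ((1 + 1/δ)^6 * ((D * D ^ δ) * (R^2 * (R ^ δ)^5))) := by
        rw [← hrw]
        linarith [hkey]
    _ = 4 * (1 + 1/δ)^6 * (D ^ ((1:ℝ) + δ) * R ^ ((2:ℝ) + ε)) := by
        rw [hDD, hRR]; ring
    _ ≤ 4 * (1 + 1/δ)^6 * (D ^ ((1:ℝ) + ε) * R ^ ((2:ℝ) + ε)) := by
        apply mul_le_mul_of_nonneg_left _ (by positivity)
        apply mul_le_mul_of_nonneg_right hDD2 (Real.rpow_pos_of_pos hR0 _).le
    _ = 4 * (1 + 1/δ)^6 * D ^ ((1:ℝ) + ε) * R ^ ((2:ℝ) + ε) := by ring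

end BQPaper18
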